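/- For every t > 0, the function f(Q) = (t/8)(1 − |Q|²)² + (h₊/8)(1 + 3|Q|⁴ − 4√6·tr Q³), with h₊ = (3 + √(9+8t))/4, is nonnegative on S₀ and vanishes exactly on the set Q_min = { √(3/2)(n⊗n − I/3) : n ∈ S² }. -/

import Mathlib

open Matrix

noncomputable section

abbrev Mat3 := Matrix (Fin 3) (Fin 3) ℝ

def S0 (Q : Mat3) : Prop := Q.IsSymm ∧ Q.trace = 0

def nsq (Q : Mat3) : ℝ := Matrix.trace (Q * Q)

def tr3 (Q : Mat3) : ℝ := Matrix.trace (Q * Q * Q)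

def unitVec (n : Fin 3 → ℝ) : Prop := ∑ i, (n i) ^ 2 = 1

def uni (s : ℝ) (n : Fin 3 → ℝ) : Mat3 :=
  s • (Matrix.vecMulVec n n - (1 / 3 : ℝ) • (1 : Mat3))

/-- The rescaled bulk potential
`f(Q) = (t/8)(1 − |Q|²)² + (h₊/8)(1 + 3|Q|⁴ − 4√6 tr Q³)`. -/
def fresc (t : ℝ) (Q : Mat3) : ℝ :=
  t / 8 * (1 - nsq Q) ^ 2 +
    (3 + Real.sqrt (9 + 8 * t)) / 4 / 8 * (1 + 3 * (nsq Q) ^ 2 - 4 * Real.sqrt 6 * tr3 Q)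

lemma eigen (Q : Mat3) (h : Q.IsSymm) :
    ∃ e : Fin 3 → ℝ,
      (∑ i, e i) = Q.trace ∧ (∑ i, (e i)^2) = nsq Q ∧ (∑ i, (e i)^3) = tr3 Q ∧
      ∀ c d : ℝ, (∀ i, (e i)^2 - c * e i - d = 0) →
        Q * Q - c • Q - d • (1 : Mat3) = 0 := by
  have hH : Q.IsHermitian := by
    rw [Matrix.IsHermitian, conjTranspose_eq_transpose_of_trivial]; exact h
  set U : Mat3 := (hH.eigenvectorUnitary : Mat3) with hU
  set e : Fin 3 → ℝ := hH.eigenvalues with he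
  have hUV : U * star U = 1 := (Matrix.mem_unitaryGroup_iff).mp (hH.eigenvectorUnitary).2
  have hVU : star U * U = 1 := (Matrix.mem_unitaryGroup_iff').mp (hH.eigenvectorUnitary).2
  have hQ : Q = U * diagonal e * star U := by simpa using hH.spectral_theorem
  have conj_mul : ∀ X Y : Mat3, (U * X * star U) * (U * Y * star U) = U * (X * Y) * star U := by
    intro X Y
    calc (U * X * star U) * (U * Y * star U)
        = U * (X * ((star U * U) * (Y * star U))) := by simp only [Matrix.mul_assoc]
      _ = U * (X * Y) * star U := by rw [hVU, Matrix.one_mul]; simp only [Matrix.mul_assoc]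
  have key : ∀ v : Fin 3 → ℝ, (U * diagonal v * star U).trace = ∑ i, v i := by
    intro v
    rw [Matrix.trace_mul_cycle, hVU, Matrix.one_mul, Matrix.trace_diagonal]
  have hsq : Q * Q = U * diagonal (fun i => (e i)^2) * star U := by
    rw [hQ, conj_mul, Matrix.diagonal_mul_diagonal]
    congr 2 with i
    ring
  have hcube : Q * Q * Q = U * diagonal (fun i => (e i)^3) * star U := by
    rw [hsq, hQ, conj_mul, Matrix.diagonal_mul_diagonal]
    congr 2 with i
  refine ⟨e, ?_, ?_, ?_, ?_⟩
  · rw [hQ, key]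
  · rw [nsq, hsq, key]
  · rw [tr3, hcube, key]
  · intro c d hcd
    have h1 : (d : ℝ) • (1 : Mat3) = U * diagonal (fun _ => d) * star U := by
      rw [← Matrix.smul_one_eq_diagonal, mul_smul_comm, smul_mul_assoc, Matrix.mul_one, hUV]
    have h2 : c • Q = U * diagonal (fun i => c * e i) * star U := by
      rw [hQ, ← smul_mul_assoc, ← mul_smul_comm, ← Matrix.diagonal_smul]
      congr 2
    rw [hsq, h1, h2, ← Matrix.sub_mul, ← Matrix.mul_sub, ← Matrix.sub_mul, ← Matrix.mul_sub]
    have hz : (diagonal fun i => (e i)^2) - diagonal (fun i => c * e i) - diagonal (fun _ : Fin 3 => d)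
        = (0 : Mat3) := by
      ext i j
      by_cases hij : i = j
      · subst hij
        simpa [Matrix.sub_apply, Matrix.diagonal_apply_eq] using hcd i
      · simp [Matrix.sub_apply, Matrix.diagonal_apply_ne _ hij]
    rw [hz, Matrix.mul_zero, Matrix.zero_mul]

lemma g_nonneg (Q : Mat3) (hQ : S0 Q) :
    0 ≤ 1 + 3 * (nsq Q)^2 - 4 * Real.sqrt 6 * tr3 Q := by
  obtain ⟨e, h1, h2, h3, -⟩ := eigen Q hQ.1
  rw [Fin.sum_univ_three] at h1 h2 h3
  rw [hQ.2] at h1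
  set x := e 0; set y := e 1; set z := e 2
  have h6 : 6 * (tr3 Q)^2 ≤ (nsq Q)^3 := by
    rw [← h2, ← h3]
    have hz : z = -x - y := by linarith
    rw [hz]
    nlinarith [sq_nonneg ((x - y)*(2*x + y)*(x + 2*y))]
  have hr0 : 0 ≤ nsq Q := by rw [← h2]; positivity
  set r := nsq Q
  set u := Real.sqrt r with hu
  have hu0 : 0 ≤ u := Real.sqrt_nonneg r
  have hu2 : u ^ 2 = r := Real.sq_sqrt hr0
  set c := Real.sqrt 6 * tr3 Q with hc
  have hc2 : c ^ 2 ≤ (u ^ 3) ^ 2 := by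
    have h66 : Real.sqrt 6 ^ 2 = 6 := Real.sq_sqrt (by norm_num)
    calc c ^ 2 = 6 * (tr3 Q)^2 := by rw [hc, mul_pow, h66]
      _ ≤ r ^ 3 := h6
      _ = (u ^ 3) ^ 2 := by rw [← hu2]; ring
  have hcu : c ≤ u ^ 3 := by
    calc c ≤ |c| := le_abs_self c
      _ = Real.sqrt (c ^ 2) := (Real.sqrt_sq_eq_abs c).symm
      _ ≤ Real.sqrt ((u ^ 3) ^ 2) := Real.sqrt_le_sqrt hc2
      _ = u ^ 3 := Real.sqrt_sq (by positivity)
  have key : 4 * (u ^ 3) ≤ 1 + 3 * (u ^ 2) ^ 2 := by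
    nlinarith [mul_nonneg (sq_nonneg (u - 1)) (by positivity : (0:ℝ) ≤ 3 * u ^ 2 + 2 * u + 1)]
  have : 4 * c ≤ 1 + 3 * r ^ 2 := by rw [← hu2]; linarith
  linarith [this]


set_option maxHeartbeats 1000000 in
lemma rankone (P : Mat3) (hs : P.IsSymm) (h2 : P * P = P) (htr : P.trace = 1) :
    ∃ n : Fin 3 → ℝ, unitVec n ∧ P = vecMulVec n n := by
  have s10 : P 1 0 = P 0 1 := hs.apply 0 1
  have s20 : P 2 0 = P 0 2 := hs.apply 0 2
  have s21 : P 2 1 = P 1 2 := hs.apply 1 2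
  have ent : ∀ i j : Fin 3, P i 0 * P 0 j + P i 1 * P 1 j + P i 2 * P 2 j = P i j := by
    intro i j
    have := congrFun (congrFun h2 i) j
    simpa [Matrix.mul_apply, Fin.sum_univ_three] using this
  have h00 := ent 0 0; have h11 := ent 1 1; have h22 := ent 2 2
  have h01 := ent 0 1; have h02 := ent 0 2; have h12 := ent 1 2
  simp only [s10, s20, s21] at h00 h11 h22 h01 h02 h12
  have htr3 : P 0 0 + P 1 1 + P 2 2 = 1 := by simpa [Matrix.trace_fin_three] using htr
  -- minors
  have hab : P 0 0 * P 1 1 = P 0 1 ^ 2 := by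
    linear_combination (-1/2 : ℝ) * h00 + (-1/2 : ℝ) * h11 + (1/2 : ℝ) * h22
      + ((P 0 0 + P 1 1 - P 2 2)/2) * htr3
  have hac : P 0 0 * P 2 2 = P 0 2 ^ 2 := by
    linear_combination (-1/2 : ℝ) * h00 + (1/2 : ℝ) * h11 + (-1/2 : ℝ) * h22
      + ((P 0 0 - P 1 1 + P 2 2)/2) * htr3
  have hbc : P 1 1 * P 2 2 = P 1 2 ^ 2 := by
    linear_combination (1/2 : ℝ) * h00 + (-1/2 : ℝ) * h11 + (-1/2 : ℝ) * h22
      + ((- P 0 0 + P 1 1 + P 2 2)/2) * htr3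
  have hdc : P 0 1 * P 2 2 = P 0 2 * P 1 2 := by
    linear_combination (-1 : ℝ) * h01 + P 0 1 * htr3
  have heb : P 0 2 * P 1 1 = P 0 1 * P 1 2 := by
    linear_combination (-1 : ℝ) * h02 + P 0 2 * htr3
  have hfa : P 1 2 * P 0 0 = P 0 1 * P 0 2 := by
    linear_combination (-1 : ℝ) * h12 + P 1 2 * htr3
  have ha0 : 0 ≤ P 0 0 := by nlinarith [h00, sq_nonneg (P 0 1), sq_nonneg (P 0 2)]
  have hb0 : 0 ≤ P 1 1 := by nlinarith [h11, sq_nonneg (P 0 1), sq_nonneg (P 1 2)]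
  have hc0 : 0 ≤ P 2 2 := by nlinarith [h22, sq_nonneg (P 0 2), sq_nonneg (P 1 2)]
  by_cases hpa : 0 < P 0 0
  · set s := Real.sqrt (P 0 0) with hsdef
    have hs2 : s ^ 2 = P 0 0 := Real.sq_sqrt ha0
    have hsne : s ≠ 0 := by positivity
    refine ⟨![s, P 0 1 / s, P 0 2 / s], ?_, ?_⟩
    · show _ = 1
      rw [Fin.sum_univ_three]
      show s ^ 2 + (P 0 1 / s) ^ 2 + (P 0 2 / s) ^ 2 = 1
      field_simp
      linear_combination h00 + (s ^ 2 + P 0 0 - 1) * hs2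
    · ext i j
      fin_cases i <;> fin_cases j
      · show P 0 0 = s * s
        linear_combination (-1 : ℝ) * hs2
      · show P 0 1 = s * (P 0 1 / s)
        field_simp
      · show P 0 2 = s * (P 0 2 / s)
        field_simp
      · show P 1 0 = P 0 1 / s * s
        rw [s10]; field_simp
      · show P 1 1 = P 0 1 / s * (P 0 1 / s)
        rw [div_mul_div_comm, eq_div_iff (by positivity : s * s ≠ 0)]
        linear_combination (P 1 1) * hs2 + hab
      · show P 1 2 = P 0 1 / s * (P 0 2 / s)
        rw [div_mul_div_comm, eq_div_iff (by positivity : s * s ≠ 0)]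
        linear_combination (P 1 2) * hs2 + hfa
      · show P 2 0 = P 0 2 / s * s
        rw [s20]; field_simp
      · show P 2 1 = P 0 2 / s * (P 0 1 / s)
        rw [s21, div_mul_div_comm, eq_div_iff (by positivity : s * s ≠ 0)]
        linear_combination (P 1 2) * hs2 + hfa
      · show P 2 2 = P 0 2 / s * (P 0 2 / s)
        rw [div_mul_div_comm, eq_div_iff (by positivity : s * s ≠ 0)]
        linear_combination (P 2 2) * hs2 + hac
  · by_cases hpb : 0 < P 1 1
    · set s := Real.sqrt (P 1 1) with hsdef
      have hs2 : s ^ 2 = P 1 1 := Real.sq_sqrt hb0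
      have hsne : s ≠ 0 := by positivity
      refine ⟨![P 0 1 / s, s, P 1 2 / s], ?_, ?_⟩
      · show _ = 1
        rw [Fin.sum_univ_three]
        show (P 0 1 / s) ^ 2 + s ^ 2 + (P 1 2 / s) ^ 2 = 1
        field_simp
        linear_combination h11 + (s ^ 2 + P 1 1 - 1) * hs2
      · ext i j
        fin_cases i <;> fin_cases j
        · show P 0 0 = P 0 1 / s * (P 0 1 / s)
          rw [div_mul_div_comm, eq_div_iff (by positivity : s * s ≠ 0)]
          linear_combination (P 0 0) * hs2 + hab
        · show P 0 1 = P 0 1 / s * s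
          field_simp
        · show P 0 2 = P 0 1 / s * (P 1 2 / s)
          rw [div_mul_div_comm, eq_div_iff (by positivity : s * s ≠ 0)]
          linear_combination (P 0 2) * hs2 + heb
        · show P 1 0 = s * (P 0 1 / s)
          rw [s10]; field_simp
        · show P 1 1 = s * s
          linear_combination (-1 : ℝ) * hs2
        · show P 1 2 = s * (P 1 2 / s)
          field_simp
        · show P 2 0 = P 1 2 / s * (P 0 1 / s)
          rw [s20, div_mul_div_comm, eq_div_iff (by positivity : s * s ≠ 0)]
          linear_combination (P 0 2) * hs2 + heb
        · show P 2 1 = P 1 2 / s * s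
          rw [s21]; field_simp
        · show P 2 2 = P 1 2 / s * (P 1 2 / s)
          rw [div_mul_div_comm, eq_div_iff (by positivity : s * s ≠ 0)]
          linear_combination (P 2 2) * hs2 + hbc
    · have hpc : 0 < P 2 2 := by
        rcases lt_or_eq_of_le ha0 with h | h
        · exact absurd h hpa
        · rcases lt_or_eq_of_le hb0 with h' | h'
          · exact absurd h' hpb
          · have : P 2 2 = 1 := by linarith
            linarith
      set s := Real.sqrt (P 2 2) with hsdef
      have hs2 : s ^ 2 = P 2 2 := Real.sq_sqrt hc0
      have hsne : s ≠ 0 := by positivity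
      refine ⟨![P 0 2 / s, P 1 2 / s, s], ?_, ?_⟩
      · show _ = 1
        rw [Fin.sum_univ_three]
        show (P 0 2 / s) ^ 2 + (P 1 2 / s) ^ 2 + s ^ 2 = 1
        field_simp
        linear_combination h22 + (s ^ 2 + P 2 2 - 1) * hs2
      · ext i j
        fin_cases i <;> fin_cases j
        · show P 0 0 = P 0 2 / s * (P 0 2 / s)
          rw [div_mul_div_comm, eq_div_iff (by positivity : s * s ≠ 0)]
          linear_combination (P 0 0) * hs2 + hac
        · show P 0 1 = P 0 2 / s * (P 1 2 / s)
          rw [div_mul_div_comm, eq_div_iff (by positivity : s * s ≠ 0)]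
          linear_combination (P 0 1) * hs2 + hdc
        · show P 0 2 = P 0 2 / s * s
          field_simp
        · show P 1 0 = P 1 2 / s * (P 0 2 / s)
          rw [s10, div_mul_div_comm, eq_div_iff (by positivity : s * s ≠ 0)]
          linear_combination (P 0 1) * hs2 + hdc
        · show P 1 1 = P 1 2 / s * (P 1 2 / s)
          rw [div_mul_div_comm, eq_div_iff (by positivity : s * s ≠ 0)]
          linear_combination (P 1 1) * hs2 + hbc
        · show P 1 2 = P 1 2 / s * s
          field_simp
        · show P 2 0 = s * (P 0 2 / s)
          rw [s20]; field_simp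
        · show P 2 1 = s * (P 1 2 / s)
          rw [s21]; field_simp
        · show P 2 2 = s * s
          linear_combination (-1 : ℝ) * hs2

lemma uni_traces (n : Fin 3 → ℝ) (hn : unitVec n) :
    nsq (uni (Real.sqrt (3/2)) n) = 1 ∧ Real.sqrt 6 * tr3 (uni (Real.sqrt (3/2)) n) = 1 := by
  set N := Matrix.vecMulVec n n with hNdef
  have hNN : N * N = N := by
    ext i j
    rw [Matrix.mul_apply, Fin.sum_univ_three]
    simp only [hNdef, Matrix.vecMulVec_apply]
    have h := hn
    rw [unitVec, Fin.sum_univ_three] at h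
    linear_combination (n i * n j) * h
  have htrN : N.trace = 1 := by
    rw [Matrix.trace_fin_three]
    simp only [hNdef, Matrix.vecMulVec_apply]
    have h := hn
    rw [unitVec, Fin.sum_univ_three] at h
    linear_combination h
  set s := Real.sqrt (3/2) with hsdef
  have hs2 : s ^ 2 = 3/2 := Real.sq_sqrt (by norm_num)
  have hs6 : Real.sqrt 6 * s = 3 := by
    rw [hsdef, ← Real.sqrt_mul (by norm_num : (6:ℝ) ≥ 0)]
    norm_num
  have hsub : (N - (1/3 : ℝ) • 1) * (N - (1/3 : ℝ) • 1)
      = (1/3 : ℝ) • N + (1/9 : ℝ) • (1 : Mat3) := by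
    rw [sub_mul, mul_sub, mul_sub, hNN, mul_smul_comm, smul_mul_assoc, smul_mul_assoc]
    simp only [Matrix.mul_one, Matrix.one_mul]
    module
  have hQ2 : uni s n * uni s n = s ^ 2 • ((1/3 : ℝ) • N + (1/9 : ℝ) • (1 : Mat3)) := by
    rw [uni, smul_mul_assoc, mul_smul_comm, smul_smul, ← pow_two, hsub]
  have hX : ((1/3:ℝ) • N + (1/9:ℝ) • (1:Mat3)) * (N - (1/3:ℝ) • 1)
      = (1/3:ℝ) • N - (1/27:ℝ) • (1:Mat3) := by
    rw [add_mul, smul_mul_assoc, smul_mul_assoc, mul_sub, mul_sub, hNN]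
    simp only [Matrix.mul_one, Matrix.one_mul, mul_smul_comm, smul_smul]
    module
  have hQ3 : uni s n * uni s n * uni s n
      = (s ^ 2 * s) • ((1/3 : ℝ) • N - (1/27 : ℝ) • (1 : Mat3)) := by
    rw [hQ2, uni, smul_mul_assoc, mul_smul_comm, smul_smul, hX]
  have htr1 : Matrix.trace (1 : Mat3) = 3 := by simp
  constructor
  · rw [nsq, hQ2, Matrix.trace_smul, Matrix.trace_add, Matrix.trace_smul, Matrix.trace_smul,
      htrN, htr1]
    simp only [smul_eq_mul]
    rw [hs2]; norm_num
  · rw [tr3, hQ3, Matrix.trace_smul, Matrix.trace_sub, Matrix.trace_smul, Matrix.trace_smul,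
      htrN, htr1]
    simp only [smul_eq_mul]
    have : Real.sqrt 6 * (s ^ 2 * s * (1/3 * 1 - 1/27 * 3)) = (Real.sqrt 6 * s) * s ^ 2 * (2/9) := by ring
    rw [this, hs6, hs2]; norm_num

lemma root_quad (w a b c : ℝ) (hw : w ^ 2 = 6) (hw0 : 0 < w)
    (hsum : a + b + c = 0) (hsq : a^2 + b^2 + c^2 = 1) (h3 : w * (a^3 + b^3 + c^3) = 1) :
    a ^ 2 - (w/6) * a - 1/3 = 0 := by
  have h2 : a*b + b*c + c*a = -1/2 := by
    linear_combination ((a + b + c)/2) * hsum - (1/2) * hsq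
  have habc : 3*w*(a*b*c) = 1 := by
    linear_combination h3 - w*(a^2 + b^2 + c^2 - a*b - b*c - c*a) * hsum
  have hcub : 3*w*a^3 - 3*w*(a/2) - 1 = 0 := by
    linear_combination 3*w*a^2 * hsum - 3*w*a * h2 + habc
  have hfact : (w*a + 1)^2 * (w*a - 2) = 0 := by
    linear_combination (w^2/3) * hcub + (a*w/2 + 1/3) * hw
  rcases mul_eq_zero.mp hfact with h | h
  · have h0 : w*a + 1 = 0 := pow_eq_zero_iff (n := 2) (by norm_num) |>.mp h
    linear_combination ((a*w - 2)/6) * h0 - (a^2/6) * hw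
  · linear_combination ((a*w + 1)/6) * h - (a^2/6) * hw

lemma struct (Q : Mat3) (hQ : S0 Q) (h1 : nsq Q = 1) (h2 : Real.sqrt 6 * tr3 Q = 1) :
    ∃ n : Fin 3 → ℝ, unitVec n ∧ Q = uni (Real.sqrt (3 / 2)) n := by
  set w := Real.sqrt 6 with hwdef
  have hw : w ^ 2 = 6 := Real.sq_sqrt (by norm_num)
  have hw0 : 0 < w := Real.sqrt_pos.mpr (by norm_num)
  have hwne : w ≠ 0 := ne_of_gt hw0
  obtain ⟨e, he1, he2, he3, hmin⟩ := eigen Q hQ.1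
  rw [Fin.sum_univ_three] at he1 he2 he3
  rw [hQ.2] at he1
  rw [h1] at he2
  have he3' : w * (e 0 ^ 3 + e 1 ^ 3 + e 2 ^ 3) = 1 := by rw [he3, h2]
  have hroot : ∀ i, (e i) ^ 2 - (w/6) * e i - 1/3 = 0 := by
    intro i
    fin_cases i
    · exact root_quad w (e 0) (e 1) (e 2) hw hw0 he1 he2 he3'
    · exact root_quad w (e 1) (e 0) (e 2) hw hw0 (by linarith) (by linarith)
        (by linear_combination he3')
    · exact root_quad w (e 2) (e 0) (e 1) hw hw0 (by linarith) (by linarith)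
        (by linear_combination he3')
  have hQQ := hmin (w/6) (1/3) hroot
  have hQ2 : Q * Q = (w/6) • Q + (1/3 : ℝ) • (1 : Mat3) := by
    have h := hQQ
    rw [sub_sub, sub_eq_zero] at h
    exact h
  set P : Mat3 := (1/3 : ℝ) • (w • Q + 1) with hPdef
  have hPs : P.IsSymm := by
    rw [Matrix.IsSymm, hPdef, Matrix.transpose_smul, Matrix.transpose_add,
      Matrix.transpose_smul, Matrix.transpose_one, hQ.1]
  have hP2 : P * P = P := by
    rw [hPdef, smul_mul_assoc, mul_smul_comm, smul_smul, add_mul, mul_add, mul_add,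
      smul_mul_assoc, mul_smul_comm, Matrix.mul_one, Matrix.one_mul, smul_smul, hQ2,
      Matrix.mul_one]
    match_scalars
    · linear_combination (w / 54) * hw
    · linear_combination (1 / 27) * hw
  have htrP : P.trace = 1 := by
    rw [hPdef, Matrix.trace_smul, Matrix.trace_add, Matrix.trace_smul, hQ.2]
    simp
  obtain ⟨n, hn, hPn⟩ := rankone P hPs hP2 htrP
  refine ⟨n, hn, ?_⟩
  have hsw : Real.sqrt (3/2) * w = 3 := by
    rw [hwdef, ← Real.sqrt_mul (by norm_num : (3/2:ℝ) ≥ 0)]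
    norm_num
  rw [uni, ← hPn, hPdef]
  match_scalars
  · linear_combination (-(1:ℝ)/3) * hsw
  · ring

theorem stmt6 (t : ℝ) (ht : 0 < t) (Q : Mat3) (hQ : S0 Q) :
    0 ≤ fresc t Q ∧
    (fresc t Q = 0 ↔ ∃ n : Fin 3 → ℝ, unitVec n ∧ Q = uni (Real.sqrt (3 / 2)) n) := by
  have hg := g_nonneg Q hQ
  have hc2 : 0 < (3 + Real.sqrt (9 + 8 * t)) / 4 / 8 := by positivity
  have hA : 0 ≤ t / 8 * (1 - nsq Q) ^ 2 := by positivity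
  have hB : 0 ≤ (3 + Real.sqrt (9 + 8 * t)) / 4 / 8 *
      (1 + 3 * (nsq Q) ^ 2 - 4 * Real.sqrt 6 * tr3 Q) := mul_nonneg (le_of_lt hc2) hg
  have hfn : 0 ≤ fresc t Q := by rw [fresc]; linarith
  refine ⟨hfn, ?_, ?_⟩
  · intro h0
    rw [fresc] at h0
    have hA0 : t / 8 * (1 - nsq Q) ^ 2 = 0 := by linarith
    have hB0 : (3 + Real.sqrt (9 + 8 * t)) / 4 / 8 *
        (1 + 3 * (nsq Q) ^ 2 - 4 * Real.sqrt 6 * tr3 Q) = 0 := by linarith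
    have hr : nsq Q = 1 := by
      have h1 : (1 - nsq Q) ^ 2 = 0 := by
        rcases mul_eq_zero.mp hA0 with h | h
        · exact absurd h (by positivity)
        · exact h
      have := pow_eq_zero_iff (n := 2) (by norm_num) |>.mp h1
      linarith
    have hgz : 1 + 3 * (nsq Q) ^ 2 - 4 * Real.sqrt 6 * tr3 Q = 0 := by
      rcases mul_eq_zero.mp hB0 with h | h
      · exact absurd h (ne_of_gt hc2)
      · exact h
    rw [hr] at hgz
    have h2 : Real.sqrt 6 * tr3 Q = 1 := by nlinarith [hgz]
    exact struct Q hQ hr h2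
  · rintro ⟨n, hn, rfl⟩
    obtain ⟨e1, e2⟩ := uni_traces n hn
    rw [fresc, e1]
    linear_combination (-(4 : ℝ) * ((3 + Real.sqrt (9 + 8 * t)) / 4 / 8)) * e2
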